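/- If n is an odd perfect number, then exactly one prime in the prime factorization of n occurs with an odd exponent; that is, there is exactly one prime q dividing n whose multiplicity in n is odd, and every other prime dividing n has even multiplicity. -/
import Mathlib

/-- If `n` is an odd perfect number, then there is exactly one prime dividing
`n` whose multiplicity in `n` is odd. -/
theorem stmt9 (n : ℕ) (hn_odd : Odd n) (hn_perf : n.Perfect) :
    ∃! q : ℕ, q.Prime ∧ q ∣ n ∧ Odd (n.factorization q) := by
  have hn0 : 0 < n := hn_perf.2
  have hnne : n ≠ 0 := hn0.ne'
  have hsum : ∑ d ∈ n.divisors, d = 2 * n :=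
    (Nat.perfect_iff_sum_divisors_eq_two_mul hn0).mp hn_perf
  set S := n.primeFactors with hS
  set g : ℕ → ℕ := fun p => ∑ k ∈ Finset.range (n.factorization p + 1), p ^ k with hg
  have hprod : ∏ p ∈ S, g p = 2 * n := by
    rw [← hsum, Nat.sum_divisors hnne]
  have hgpos : ∀ p ∈ S, 0 < g p := by
    intro p hp
    have hp1 : (1:ℕ) ≤ p := (Nat.prime_of_mem_primeFactors hp).one_lt.le
    exact Finset.sum_pos (fun k _ => pow_pos (lt_of_lt_of_le one_pos hp1) k) ⟨0, by simp⟩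
  -- 2-adic valuation
  have hv2n : (2 * n).factorization 2 = 1 := by
    rw [Nat.factorization_mul two_ne_zero hnne]
    have h2 : n.factorization 2 = 0 :=
      Nat.factorization_eq_zero_of_not_dvd (by
        intro h; exact (Nat.not_even_iff_odd.mpr hn_odd) (even_iff_two_dvd.mpr h))
    simp [Finsupp.add_apply, h2, Nat.Prime.factorization_self Nat.prime_two]
  have hvsum : ∑ p ∈ S, (g p).factorization 2 = 1 := by
    have := Nat.factorization_prod (S := S) (g := g) (fun p hp => (hgpos p hp).ne')
    have h2 := congrArg (fun f => f 2) this
    simp only [hprod] at h2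
    rw [Finset.sum_apply'] at h2
    rw [← h2, hv2n]
  -- parity of g p
  have hgmod : ∀ p ∈ S, g p % 2 = (n.factorization p + 1) % 2 := by
    intro p hp
    have hpodd : p % 2 = 1 := by
      have hpn : p ∣ n := Nat.dvd_of_mem_primeFactors hp
      have h2 : ¬ 2 ∣ p := fun h2 =>
        (Nat.not_even_iff_odd.mpr hn_odd) (even_iff_two_dvd.mpr (h2.trans hpn))
      omega
    rw [hg]
    rw [Finset.sum_nat_mod]
    have : ∀ k ∈ Finset.range (n.factorization p + 1), p ^ k % 2 = 1 % 2 := by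
      intro k _
      rw [Nat.pow_mod, hpodd, one_pow]
    rw [Finset.sum_congr rfl this]
    simp
  have hkey : ∀ p ∈ S, (Odd (n.factorization p) ↔ 1 ≤ (g p).factorization 2) := by
    intro p hp
    constructor
    · intro hodd
      have h2dvd : 2 ∣ g p := by
        have := hgmod p hp
        rw [Nat.odd_iff] at hodd
        omega
      exact (Nat.Prime.factorization_pos_of_dvd Nat.prime_two (hgpos p hp).ne' h2dvd)
    · intro hle
      have h2dvd : 2 ∣ g p := by
        by_contra h
        rw [Nat.factorization_eq_zero_of_not_dvd h] at hle
        omega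
      have := hgmod p hp
      rw [Nat.odd_iff]
      omega
  -- extract the unique prime
  obtain ⟨p, hpS, hpne⟩ : ∃ p ∈ S, (g p).factorization 2 ≠ 0 := by
    by_contra h
    push_neg at h
    rw [Finset.sum_eq_zero h] at hvsum
    omega
  have hpodd : Odd (n.factorization p) := (hkey p hpS).mpr (by omega)
  refine ⟨p, ⟨Nat.prime_of_mem_primeFactors hpS, Nat.dvd_of_mem_primeFactors hpS, hpodd⟩, ?_⟩
  intro q ⟨hq, hqn, hqodd⟩
  have hqS : q ∈ S := Nat.mem_primeFactors.mpr ⟨hq, hqn, hnne⟩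
  have hq1 : 1 ≤ (g q).factorization 2 := (hkey q hqS).mp hqodd
  by_contra hne
  have hsub : {p, q} ⊆ S := by
    intro x hx
    rcases Finset.mem_insert.mp hx with h | h
    · exact h ▸ hpS
    · exact (Finset.mem_singleton.mp h) ▸ hqS
  have h2le : 2 ≤ ∑ r ∈ S, (g r).factorization 2 := by
    calc 2 ≤ ∑ r ∈ ({p, q} : Finset ℕ), (g r).factorization 2 := by
          rw [Finset.sum_pair (Ne.symm hne)]; omega
      _ ≤ ∑ r ∈ S, (g r).factorization 2 :=
          Finset.sum_le_sum_of_subset hsub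
  omega
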